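/- Let G be an abelian Polish group with a compatible translation-invariant complete metric, (t_k)_{k≥1} a good sequence in G, and (A_k)_{k≥0} a decreasing sequence of subsets of ℕ with A₀ = ℕ and A_k \ A_{k+1} infinite for all k ≥ 0. Fix k, l ≥ 1. Then the family of translates {C⁰_{k,l} + p(τ) : τ ∈ D_{k,l}} is pairwise disjoint, its union equals C_{k+l}, and it is uncountable (indeed p is injective on D_{k,l} and D_{k,l} is uncountable). -/

import Mathlib

open Set TopologicalSpace

/-- `p(σ) = ∑ₖ σ(k)·t k` for `σ ∈ {0,1}^ℕ`. -/
noncomputable def pSum {G : Type*} [AddCommGroup G] [TopologicalSpace G]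
    (t : ℕ → G) (σ : ℕ → Bool) : G :=
  ∑' k, if σ k then t k else 0

/-- `B_k = {σ ∈ {0,1}^ℕ : σ(i) = 0 if i < k or i ∈ A_k}`. -/
def BSet (A : ℕ → Set ℕ) (k : ℕ) : Set (ℕ → Bool) :=
  {σ | ∀ i : ℕ, (i < k ∨ i ∈ A k) → σ i = false}

/-- `B⁰_{k,l} = {σ ∈ B_k : σ(k) = ⋯ = σ(k+l-1) = 0}`. -/
def BSet0 (A : ℕ → Set ℕ) (k l : ℕ) : Set (ℕ → Bool) :=
  {σ | σ ∈ BSet A k ∧ ∀ i : ℕ, k ≤ i → i < k + l → σ i = false}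

/-- `D_{k,l} = {τ ∈ {0,1}^ℕ : τ(s) = 0 if s < k + l or s ∉ A_k \ A_{k+l}}`. -/
def DSet (A : ℕ → Set ℕ) (k l : ℕ) : Set (ℕ → Bool) :=
  {τ | ∀ s : ℕ, (s < k + l ∨ s ∉ A k \ A (k + l)) → τ s = false}

section Aux
variable {G : Type*} [AddCommGroup G] [MetricSpace G] [CompleteSpace G]
  [IsTopologicalAddGroup G]

lemma dist_zero_finsum (hmetinv : ∀ a b u : G, dist (a + u) (b + u) = dist a b)
    (f : ℕ → G) (s : Finset ℕ) : dist 0 (∑ i ∈ s, f i) ≤ ∑ i ∈ s, dist 0 (f i) := by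
  induction s using Finset.cons_induction with
  | empty => simp
  | cons a s ha ih =>
    rw [Finset.sum_cons, Finset.sum_cons]
    have h1 : dist (f a) (f a + ∑ i ∈ s, f i) = dist 0 (∑ i ∈ s, f i) := by
      have := hmetinv 0 (∑ i ∈ s, f i) (f a)
      rw [zero_add, add_comm] at this
      exact this
    calc dist 0 (f a + ∑ i ∈ s, f i)
        ≤ dist 0 (f a) + dist (f a) (f a + ∑ i ∈ s, f i) := dist_triangle _ _ _
      _ ≤ dist 0 (f a) + ∑ i ∈ s, dist 0 (f i) := by rw [h1]; linarith

lemma summable_pSum (hmetinv : ∀ a b u : G, dist (a + u) (b + u) = dist a b)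
    (t : ℕ → G) (hsum : Summable fun k => dist (0 : G) (t k)) (σ : ℕ → Bool) :
    Summable (fun k => if σ k then t k else (0 : G)) := by
  set f : ℕ → G := fun k => if σ k then t k else 0 with hf
  rw [summable_iff_cauchySeq_finset]
  rw [Metric.cauchySeq_iff']
  intro ε hε
  obtain ⟨s₀, hs₀⟩ := hsum.vanishing (Metric.ball_mem_nhds 0 hε)
  refine ⟨s₀, fun n hn => ?_⟩
  have hsub : s₀ ⊆ n := hn
  have hsplit : ∑ i ∈ n \ s₀, f i + ∑ i ∈ s₀, f i = ∑ i ∈ n, f i :=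
    Finset.sum_sdiff hsub
  have h1 : dist (∑ i ∈ n, f i) (∑ i ∈ s₀, f i) = dist (∑ i ∈ n \ s₀, f i) 0 := by
    rw [← hsplit]
    have := hmetinv (∑ i ∈ n \ s₀, f i) 0 (∑ i ∈ s₀, f i)
    rw [zero_add] at this
    exact this
  rw [h1, dist_comm]
  have h2 : dist 0 (∑ i ∈ n \ s₀, f i) ≤ ∑ i ∈ n \ s₀, dist (0 : G) (f i) :=
    dist_zero_finsum hmetinv f _
  have h3 : ∑ i ∈ n \ s₀, dist (0 : G) (f i) ≤ ∑ i ∈ n \ s₀, dist (0 : G) (t i) := by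
    apply Finset.sum_le_sum
    intro i _
    by_cases h : σ i <;> simp [hf, h, dist_nonneg]
  have h4 := hs₀ (n \ s₀) (Finset.sdiff_disjoint)
  rw [Metric.mem_ball, Real.dist_eq, sub_zero] at h4
  have h5 : |∑ i ∈ n \ s₀, dist (0 : G) (t i)| = ∑ i ∈ n \ s₀, dist (0 : G) (t i) :=
    abs_of_nonneg (Finset.sum_nonneg fun i _ => dist_nonneg)
  linarith [h4, h5.symm ▸ h4]

lemma pSum_add_disj (hmetinv : ∀ a b u : G, dist (a + u) (b + u) = dist a b)
    (t : ℕ → G) (hsum : Summable fun k => dist (0 : G) (t k)) (σ τ : ℕ → Bool)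
    (h : ∀ s, σ s = true → τ s = false) :
    pSum t σ + pSum t τ = pSum t (fun s => σ s || τ s) := by
  rw [pSum, pSum, pSum,
    ← Summable.tsum_add (summable_pSum hmetinv t hsum σ) (summable_pSum hmetinv t hsum τ)]
  apply tsum_congr
  intro b
  by_cases h1 : σ b
  · have := h b h1
    simp [h1, this]
  · simp [h1]

end Aux

/-- With `(t k)` a good sequence in an abelian Polish group `G` (with
compatible translation-invariant complete metric) and `(A k)` a decreasing sequence of
subsets of `ℕ` with `A 0 = ℕ` and `A k \ A (k+1)` infinite, for fixed `k, l ≥ 1` the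
translates `C⁰_{k,l} + p(τ)`, `τ ∈ D_{k,l}`, are pairwise disjoint, their union is
`C_{k+l}`, and there are uncountably many of them (`p` is injective on the uncountable
set `D_{k,l}`). -/
theorem stmt_18 {G : Type*} [AddCommGroup G] [MetricSpace G] [CompleteSpace G]
    [SeparableSpace G] [IsTopologicalAddGroup G]
    (hmetinv : ∀ a b u : G, dist (a + u) (b + u) = dist a b)
    (t : ℕ → G) (htinj : Function.Injective t)
    (hsum : Summable fun k => dist (0 : G) (t k))
    (hgood : Function.Injective (pSum t))
    (A : ℕ → Set ℕ) (hA0 : A 0 = Set.univ)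
    (hAdec : ∀ k, A (k + 1) ⊆ A k)
    (hAinf : ∀ k, (A k \ A (k + 1)).Infinite)
    (k l : ℕ) (hk : 1 ≤ k) (hl : 1 ≤ l) :
    (∀ τ₁ ∈ DSet A k l, ∀ τ₂ ∈ DSet A k l, τ₁ ≠ τ₂ →
        Disjoint ((fun x => x + pSum t τ₁) '' (pSum t '' BSet0 A k l))
          ((fun x => x + pSum t τ₂) '' (pSum t '' BSet0 A k l))) ∧
    (⋃ τ ∈ DSet A k l, (fun x => x + pSum t τ) '' (pSum t '' BSet0 A k l)) =
      pSum t '' BSet A (k + l) ∧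
    ¬ (DSet A k l).Countable ∧
    Set.InjOn (pSum t) (DSet A k l) := by
  classical
  have Amono : ∀ {m n : ℕ}, m ≤ n → A n ⊆ A m := by
    intro m n hmn
    induction n with
    | zero => simp_all
    | succ n ih =>
      rcases Nat.lt_or_ge m (n+1) with h | h
      · exact (hAdec n).trans (ih (Nat.lt_succ_iff.mp h))
      · have : m = n + 1 := le_antisymm hmn h
        subst this; exact fun _ h => h
  -- support disjointness of σ ∈ BSet0 and τ ∈ DSet
  have hdisj : ∀ σ ∈ BSet0 A k l, ∀ τ ∈ DSet A k l, ∀ s, σ s = true → τ s = false := by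
    intro σ hσ τ hτ s hs
    by_cases hAk : s ∈ A k
    · exact absurd (hσ.1 s (Or.inr hAk)) (by simp [hs])
    · exact hτ s (Or.inr (fun h => hAk h.1))
  refine ⟨?_, ?_, ?_, hgood.injOn⟩
  · -- pairwise disjoint
    intro τ₁ hτ₁ τ₂ hτ₂ hne
    rw [Set.disjoint_left]
    rintro x ⟨_, ⟨σ₁, hσ₁, rfl⟩, rfl⟩ ⟨_, ⟨σ₂, hσ₂, rfl⟩, hx⟩
    apply hne
    have e1 := pSum_add_disj hmetinv t hsum σ₁ τ₁ (hdisj σ₁ hσ₁ τ₁ hτ₁)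
    have e2 := pSum_add_disj hmetinv t hsum σ₂ τ₂ (hdisj σ₂ hσ₂ τ₂ hτ₂)
    have heq : (fun s => σ₂ s || τ₂ s) = (fun s => σ₁ s || τ₁ s) :=
      hgood (by rw [← e1, ← e2]; exact hx)
    funext s
    have hs := congrFun heq s
    by_cases hAk : s ∈ A k
    · have h1 : σ₁ s = false := hσ₁.1 s (Or.inr hAk)
      have h2 : σ₂ s = false := hσ₂.1 s (Or.inr hAk)
      simpa [h1, h2] using hs.symm
    · rw [hτ₁ s (Or.inr (fun h => hAk h.1)), hτ₂ s (Or.inr (fun h => hAk h.1))]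
  · -- union
    ext x
    simp only [Set.mem_iUnion, Set.mem_image, exists_prop]
    constructor
    · rintro ⟨τ, hτ, _, ⟨σ, hσ, rfl⟩, rfl⟩
      refine ⟨fun s => σ s || τ s, ?_, (pSum_add_disj hmetinv t hsum σ τ (hdisj σ hσ τ hτ)).symm⟩
      intro i hi
      rcases hi with hi | hi
      · have h1 : σ i = false := by
          rcases Nat.lt_or_ge i k with h | h
          · exact hσ.1 i (Or.inl h)
          · exact hσ.2 i h hi
        have h2 : τ i = false := hτ i (Or.inl hi)
        simp [h1, h2]
      · have h1 : σ i = false := hσ.1 i (Or.inr (Amono (Nat.le_add_right k l) hi))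
        have h2 : τ i = false := hτ i (Or.inr (fun h => h.2 hi))
        simp [h1, h2]
    · rintro ⟨ρ, hρ, rfl⟩
      set τ : ℕ → Bool := fun s => if s ∈ A k then ρ s else false with hτdef
      set σ : ℕ → Bool := fun s => if s ∈ A k then false else ρ s with hσdef
      have hτD : τ ∈ DSet A k l := by
        intro s hs
        rcases hs with hs | hs
        · simp [hτdef, hρ s (Or.inl hs)]
        · by_cases hAk : s ∈ A k
          · have : s ∈ A (k + l) := by
              by_contra h
              exact hs ⟨hAk, h⟩
            simp [hτdef, hρ s (Or.inr this)]
          · simp [hτdef, hAk]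
      have hσB : σ ∈ BSet0 A k l := by
        constructor
        · intro i hi
          rcases hi with hi | hi
          · simp [hσdef, hρ i (Or.inl (lt_of_lt_of_le hi (Nat.le_add_right k l)))]
          · simp [hσdef, hi]
        · intro i h1 h2
          simp [hσdef, hρ i (Or.inl h2)]
      refine ⟨τ, hτD, pSum t σ, ⟨σ, hσB, rfl⟩, ?_⟩
      have hd : ∀ s, σ s = true → τ s = false := by
        intro s hs
        by_cases hAk : s ∈ A k
        · simp [hσdef, hAk] at hs
        · simp [hτdef, hAk]
      rw [pSum_add_disj hmetinv t hsum σ τ hd]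
      congr 1
      funext s
      by_cases hAk : s ∈ A k <;> simp [hσdef, hτdef, hAk]
  · -- uncountable
    intro hcnt
    set S : Set ℕ := (A k \ A (k + l)) \ {s | s < k + l} with hSdef
    have hSinf : S.Infinite := by
      apply Set.Infinite.diff _ (Set.finite_Iio (k + l))
      have hm : (k + l - 1) + 1 = k + l := by omega
      apply Set.Infinite.mono _ (hAinf (k + l - 1))
      intro x hx
      rw [hm] at hx
      exact ⟨Amono (by omega) hx.1, hx.2⟩
    set e := hSinf.natEmbedding
    set c : ℕ → ℕ := fun n => (e n : ℕ) with hcdef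
    have cinj : Function.Injective c := fun a b h => e.injective (Subtype.ext h)
    have cmem : ∀ n, c n ∈ S := fun n => (e n).2
    set F : (ℕ → Bool) → (ℕ → Bool) :=
      fun g s => if h : ∃ n, c n = s then g h.choose else false with hFdef
    have Finj : Function.Injective F := by
      intro g g' hgg
      funext n
      have hex : ∃ m, c m = c n := ⟨n, rfl⟩
      have hch : hex.choose = n := cinj hex.choose_spec
      have h1 : F g (c n) = g n := by rw [hFdef]; simp only; rw [dif_pos hex, hch]
      have h2 : F g' (c n) = g' n := by rw [hFdef]; simp only; rw [dif_pos hex, hch]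
      rw [← h1, ← h2, hgg]
    have hrange : ∀ g, F g ∈ DSet A k l := by
      intro g s hs
      rw [hFdef]
      simp only
      rw [dif_neg]
      rintro ⟨n, rfl⟩
      have := cmem n
      rw [hSdef] at this
      rcases hs with hs | hs
      · exact this.2 hs
      · exact hs this.1
    have : (Set.univ : Set (ℕ → Bool)).Countable := by
      refine (hcnt.preimage Finj).mono ?_
      intro g _
      exact hrange g
    have hC : Countable (ℕ → Bool) := Set.countable_univ_iff.mp this
    have E : Set ℕ → (ℕ → Bool) := fun s n => decide (n ∈ s)
    have Einj : Function.Injective (fun (s : Set ℕ) (n : ℕ) => (decide (n ∈ s) : Bool)) := by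
      intro s s' h
      ext n
      have := congrFun h n
      simpa using this
    have : Countable (Set ℕ) := Einj.countable
    obtain ⟨f, hf⟩ := Countable.exists_injective_nat (Set ℕ)
    exact Function.cantor_injective f hf
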